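/- Let B be an order-m dimension-n real tensor (m ≥ 2) with all entries nonnegative, let s > 0 and b ∈ ℝ^n with b ≥ 0, and set A = s I − B. Suppose there exists z ∈ ℝ^n with z > 0 (all components strictly positive) and A z^{m-1} > 0. Define α = min_i b_i/(A z^{m-1})_i and β = max_i b_i/(A z^{m-1})_i. Then there exists x ∈ ℝ^n with α^{1/(m-1)} z ≤ x ≤ β^{1/(m-1)} z (in particular x ≥ 0) satisfying A x^{m-1} = b. -/

import Mathlib

/-- `(A x^{m-1})_i = ∑_{i₂,…,i_m} a_{i i₂ … i_m} x_{i₂} ⋯ x_{i_m}`. -/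
def tApply {n k : ℕ} (A : Fin n → (Fin k → Fin n) → ℝ) (x : Fin n → ℝ) : Fin n → ℝ :=
  fun i => ∑ j : Fin k → Fin n, A i j * ∏ t, x (j t)

/-- The identity tensor: entries `1` when all indices are equal, `0` otherwise. -/
def idT {n k : ℕ} : Fin n → (Fin k → Fin n) → ℝ :=
  fun i j => if ∀ t, j t = i then 1 else 0

lemma tApply_idT {n k : ℕ} (x : Fin n → ℝ) (i : Fin n) :
    tApply (idT (k := k)) x i = x i ^ k := by
  unfold tApply idT
  rw [Finset.sum_eq_single (fun _ => i)]
  · simp [Finset.prod_const]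
  · intro j _ hj
    have : ¬ ∀ t, j t = i := fun h => hj (funext h)
    simp [this]
  · simp

lemma tApply_smul {n k : ℕ} (A : Fin n → (Fin k → Fin n) → ℝ) (c : ℝ) (x : Fin n → ℝ)
    (i : Fin n) : tApply A (fun t => c * x t) i = c ^ k * tApply A x i := by
  unfold tApply
  rw [Finset.mul_sum]
  refine Finset.sum_congr rfl fun j _ => ?_
  rw [Finset.prod_mul_distrib, Finset.prod_const, Finset.card_univ, Fintype.card_fin]
  ring

lemma tApply_nonneg {n k : ℕ} {B : Fin n → (Fin k → Fin n) → ℝ} (hB : ∀ i j, 0 ≤ B i j)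
    {x : Fin n → ℝ} (hx : ∀ i, 0 ≤ x i) (i : Fin n) : 0 ≤ tApply B x i :=
  Finset.sum_nonneg fun j _ => mul_nonneg (hB i j)
    (Finset.prod_nonneg fun t _ => hx (j t))

lemma tApply_mono {n k : ℕ} {B : Fin n → (Fin k → Fin n) → ℝ} (hB : ∀ i j, 0 ≤ B i j)
    {x y : Fin n → ℝ} (hx : ∀ i, 0 ≤ x i) (hxy : ∀ i, x i ≤ y i) (i : Fin n) :
    tApply B x i ≤ tApply B y i :=
  Finset.sum_le_sum fun j _ => mul_le_mul_of_nonneg_left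
    (Finset.prod_le_prod (fun t _ => hx (j t)) (fun t _ => hxy (j t))) (hB i j)

theorem stmt8 {n m : ℕ} (hm : 2 ≤ m) (B : Fin n → (Fin (m - 1) → Fin n) → ℝ)
    (hB : ∀ i j, 0 ≤ B i j) (s : ℝ) (hs : 0 < s) (b : Fin n → ℝ) (hb : ∀ i, 0 ≤ b i)
    (A : Fin n → (Fin (m - 1) → Fin n) → ℝ)
    (hA : ∀ i j, A i j = s * idT i j - B i j)
    (z : Fin n → ℝ) (hz : ∀ i, 0 < z i) (hAz : ∀ i, 0 < tApply A z i)
    (α β : ℝ)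
    (hα : IsLeast {r : ℝ | ∃ i, r = b i / tApply A z i} α)
    (hβ : IsGreatest {r : ℝ | ∃ i, r = b i / tApply A z i} β) :
    ∃ x : Fin n → ℝ,
      (∀ i, α ^ ((1 : ℝ) / ((m : ℝ) - 1)) * z i ≤ x i) ∧
      (∀ i, x i ≤ β ^ ((1 : ℝ) / ((m : ℝ) - 1)) * z i) ∧
      ∀ i, tApply A x i = b i := by
  have hKdef : True := trivial
  have hm1 : (1 : ℕ) ≤ m := le_trans one_le_two hm
  have hKcast : ((m - 1 : ℕ) : ℝ) = (m : ℝ) - 1 := by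
    rw [Nat.cast_sub hm1]; norm_num
  have hm2 : (2 : ℝ) ≤ (m : ℝ) := by exact_mod_cast hm
  have hm1pos : (0 : ℝ) < (m : ℝ) - 1 := by linarith
  set e : ℝ := (1 : ℝ) / ((m : ℝ) - 1) with he
  have he_pos : 0 < e := by positivity
  have hKe : (((m-1) : ℕ) : ℝ) * e = 1 := by
    rw [hKcast, he]; field_simp
  have heK : e * (((m-1) : ℕ) : ℝ) = 1 := by rw [mul_comm]; exact hKe
  -- A decomposition
  have hAx : ∀ (x : Fin n → ℝ) (i : Fin n),
      tApply A x i = s * x i ^ (m-1) - tApply B x i := by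
    intro x i
    have : tApply A x i = s * tApply (idT (k := (m-1))) x i - tApply B x i := by
      unfold tApply
      rw [Finset.mul_sum, ← Finset.sum_sub_distrib]
      refine Finset.sum_congr rfl fun j _ => ?_
      rw [hA]; ring
    rw [this, tApply_idT]
  -- α, β nonneg
  obtain ⟨iα, hiα⟩ := hα.1
  obtain ⟨iβ, hiβ⟩ := hβ.1
  have hα0 : 0 ≤ α := hiα ▸ div_nonneg (hb iα) (hAz iα).le
  have hβ0 : 0 ≤ β := hiβ ▸ div_nonneg (hb iβ) (hAz iβ).le
  have hαβ : α ≤ β := hα.2 hβ.1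
  -- key inequalities
  have hαA : ∀ i, α * tApply A z i ≤ b i := by
    intro i
    have h1 : α ≤ b i / tApply A z i := hα.2 ⟨i, rfl⟩
    calc α * tApply A z i ≤ (b i / tApply A z i) * tApply A z i :=
          mul_le_mul_of_nonneg_right h1 (hAz i).le
      _ = b i := div_mul_cancel₀ _ (hAz i).ne'
  have hβA : ∀ i, b i ≤ β * tApply A z i := by
    intro i
    have h1 : b i / tApply A z i ≤ β := hβ.2 ⟨i, rfl⟩
    calc b i = (b i / tApply A z i) * tApply A z i := (div_mul_cancel₀ _ (hAz i).ne').symm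
      _ ≤ β * tApply A z i := mul_le_mul_of_nonneg_right h1 (hAz i).le
  set c : ℝ := α ^ e with hc
  set d : ℝ := β ^ e with hd
  have hc0 : 0 ≤ c := Real.rpow_nonneg hα0 _
  have hd0 : 0 ≤ d := Real.rpow_nonneg hβ0 _
  have hcd : c ≤ d := Real.rpow_le_rpow hα0 hαβ he_pos.le
  have hcK : c ^ (m-1) = α := by
    rw [hc, ← Real.rpow_natCast (α ^ e) (m-1), ← Real.rpow_mul hα0, heK, Real.rpow_one]
  have hdK : d ^ (m-1) = β := by
    rw [hd, ← Real.rpow_natCast (β ^ e) (m-1), ← Real.rpow_mul hβ0, heK, Real.rpow_one]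
  set u : Fin n → ℝ := fun i => c * z i with hu
  set v : Fin n → ℝ := fun i => d * z i with hv
  have hu0 : ∀ i, 0 ≤ u i := fun i => mul_nonneg hc0 (hz i).le
  have huv : u ≤ v := fun i => mul_le_mul_of_nonneg_right hcd (hz i).le
  -- the iteration map
  set g : (Fin n → ℝ) → (Fin n → ℝ) :=
    fun x i => ((b i + tApply B x i) / s) ^ e with hg
  have hbase : ∀ (x : Fin n → ℝ), (∀ i, 0 ≤ x i) → ∀ i, 0 ≤ (b i + tApply B x i) / s :=
    fun x hx i => div_nonneg (add_nonneg (hb i) (tApply_nonneg hB hx i)) hs.le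
  have hg_mono : ∀ x y : Fin n → ℝ, (∀ i, 0 ≤ x i) → x ≤ y → g x ≤ g y := by
    intro x y hx hxy i
    refine Real.rpow_le_rpow (hbase x hx i) ?_ he_pos.le
    have := tApply_mono hB hx hxy i
    gcongr
  -- u ≤ g u
  have h_gu : u ≤ g u := by
    intro i
    have hBu : tApply B u i = α * tApply B z i := by
      rw [hu]; rw [tApply_smul, hcK]
    have h1 : α * (s * z i ^ (m-1)) ≤ b i + α * tApply B z i := by
      have := hαA i
      rw [hAx z i] at this
      nlinarith [tApply_nonneg hB (fun j => (hz j).le) i]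
    have h2 : (u i) ^ (m-1) ≤ (b i + tApply B u i) / s := by
      rw [hBu, hu]
      rw [mul_pow, hcK]
      rw [le_div_iff₀ hs]
      calc α * z i ^ (m-1) * s = α * (s * z i ^ (m-1)) := by ring
        _ ≤ b i + α * tApply B z i := h1
    calc u i = ((u i) ^ (m-1)) ^ e := by
          rw [← Real.rpow_natCast (u i) (m-1), ← Real.rpow_mul (hu0 i), hKe, Real.rpow_one]
      _ ≤ ((b i + tApply B u i) / s) ^ e :=
          Real.rpow_le_rpow (pow_nonneg (hu0 i) (m-1)) h2 he_pos.le
  -- g v ≤ v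
  have h_gv : g v ≤ v := by
    intro i
    have hv0i : 0 ≤ v i := mul_nonneg hd0 (hz i).le
    have hBv : tApply B v i = β * tApply B z i := by
      rw [hv]; rw [tApply_smul, hdK]
    have h1 : b i + β * tApply B z i ≤ β * (s * z i ^ (m-1)) := by
      have := hβA i
      rw [hAx z i] at this
      nlinarith [tApply_nonneg hB (fun j => (hz j).le) i]
    have h2 : (b i + tApply B v i) / s ≤ (v i) ^ (m-1) := by
      rw [hBv, hv, mul_pow, hdK, div_le_iff₀ hs]
      calc b i + β * tApply B z i ≤ β * (s * z i ^ (m-1)) := h1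
        _ = β * z i ^ (m-1) * s := by ring
    calc g v i ≤ ((v i) ^ (m-1)) ^ e :=
          Real.rpow_le_rpow (hbase v (fun j => mul_nonneg hd0 (hz j).le) i) h2 he_pos.le
      _ = v i := by
          rw [← Real.rpow_natCast (v i) (m-1), ← Real.rpow_mul hv0i, hKe, Real.rpow_one]
  -- g maps Icc u v into itself
  haveI : Fact (u ≤ v) := ⟨huv⟩
  have hmaps : ∀ x : Fin n → ℝ, x ∈ Set.Icc u v → g x ∈ Set.Icc u v := by
    intro x hx
    have hx0 : ∀ i, 0 ≤ x i := fun i => le_trans (hu0 i) (hx.1 i)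
    exact ⟨le_trans h_gu (hg_mono u x hu0 hx.1),
           le_trans (hg_mono x v hx0 hx.2) h_gv⟩
  let T : Set.Icc u v →o Set.Icc u v :=
    { toFun := fun x => ⟨g x.1, hmaps x.1 x.2⟩
      monotone' := by
        intro x y hxy
        exact hg_mono x.1 y.1 (fun i => le_trans (hu0 i) (x.2.1 i)) hxy }
  obtain ⟨x, hxfix⟩ : ∃ x : Set.Icc u v, T x = x := ⟨T.lfp, T.map_lfp⟩
  have hxg : g x.1 = x.1 := congrArg Subtype.val hxfix
  refine ⟨x.1, x.2.1, x.2.2, fun i => ?_⟩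
  have hx0 : ∀ i, 0 ≤ x.1 i := fun i => le_trans (hu0 i) (x.2.1 i)
  have hxi : x.1 i = ((b i + tApply B x.1 i) / s) ^ e := by
    conv_lhs => rw [← hxg]
  have hpow : x.1 i ^ (m-1) = (b i + tApply B x.1 i) / s := by
    rw [hxi, ← Real.rpow_natCast _ (m-1), ← Real.rpow_mul (hbase x.1 hx0 i), heK,
      Real.rpow_one]
  rw [hAx, hpow]
  field_simp
  ring
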